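/- Let I be a finite set and f : I → ℤ with e := ∑_{D∈I} f(D) ≥ 2. Suppose that for every subset T ⊆ I one has |∑_{D∈I} f(D) − 2·∑_{D∈T} f(D)| ≥ e (i.e. no sign-flip of the values can produce a total of absolute value smaller than e). Then: (a) there is no D ∈ I with f(D) = 1; and (b) there exists E ∈ I with f(E) ≥ |{D ∈ I : f(D) = −1}| + e. -/

import Mathlib

/-- **Combinatorial core of Case 1 of Lemma 14 (viol4).** Let `I` be a finite
set and `f : I → ℤ` with total sum `e ≥ 2`.  Suppose that for every `T ⊆ I` one
has `|∑_{D ∈ I} f D - 2 ∑_{D ∈ T} f D| ≥ e`, i.e. no sign-flip of the values can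
produce a total of absolute value smaller than `e`.  Then (a) no `D ∈ I` has
`f D = 1`, and (b) some `E ∈ I` satisfies `f E ≥ |{D ∈ I : f D = -1}| + e`. -/
theorem min_imbalance_structure {ι : Type*} [DecidableEq ι]
    (I : Finset ι) (f : ι → ℤ) (e : ℤ)
    (he : e = ∑ D ∈ I, f D) (he2 : 2 ≤ e)
    (hflip : ∀ T ⊆ I, e ≤ |∑ D ∈ I, f D - 2 * ∑ D ∈ T, f D|) :
    (∀ D ∈ I, f D ≠ 1) ∧
      ∃ E ∈ I, (((I.filter fun D => f D = -1).card : ℤ) + e ≤ f E) := by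
  constructor
  · intro D hD hfD
    have h := hflip {D} (by simpa using hD)
    rw [← he, Finset.sum_singleton, hfD] at h
    rcases abs_cases (e - 2 * 1) with ⟨h1, _⟩ | ⟨h1, _⟩ <;> omega
  · obtain ⟨E, hE, hEpos⟩ : ∃ E ∈ I, 0 < f E := by
      by_contra h
      push_neg at h
      have : ∑ D ∈ I, f D ≤ 0 := Finset.sum_nonpos (fun D hD => h D hD)
      omega
    have hEe : e ≤ f E := by
      have h := hflip {E} (by simpa using hE)
      rw [← he, Finset.sum_singleton] at h
      rcases abs_cases (e - 2 * f E) with ⟨h1, _⟩ | ⟨h1, _⟩ <;> omega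
    refine ⟨E, hE, ?_⟩
    by_contra hcon
    push_neg at hcon
    set N := I.filter fun D => f D = -1 with hN
    set j : ℕ := (f E - (e - 1)).toNat with hj
    have hjcard : j ≤ N.card := by
      have : (j : ℤ) = f E - (e - 1) := by
        rw [hj]; exact Int.toNat_of_nonneg (by omega)
      omega
    obtain ⟨N', hN'sub, hN'card⟩ := Finset.exists_subset_card_eq hjcard
    have hEN' : E ∉ N' := by
      intro hmem
      have := (Finset.mem_filter.mp (hN'sub hmem)).2
      omega
    have hsum : ∑ D ∈ insert E N', f D = f E - (j : ℤ) := by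
      rw [Finset.sum_insert hEN']
      have : ∑ D ∈ N', f D = ∑ D ∈ N', (-1 : ℤ) := by
        refine Finset.sum_congr rfl fun x hx => ?_
        exact (Finset.mem_filter.mp (hN'sub hx)).2
      rw [this, Finset.sum_const, hN'card]
      simp only [smul_neg, nsmul_eq_mul, mul_one]
      ring
    have hTsub : insert E N' ⊆ I := by
      intro x hx
      rcases Finset.mem_insert.mp hx with rfl | hx
      · exact hE
      · exact Finset.filter_subset _ _ (hN'sub hx)
    have h := hflip _ hTsub
    rw [← he, hsum] at h
    have hjval : (j : ℤ) = f E - (e - 1) := by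
      rw [hj]; exact Int.toNat_of_nonneg (by omega)
    rcases abs_cases (e - 2 * (f E - (j : ℤ))) with ⟨h1, _⟩ | ⟨h1, _⟩ <;> omega
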